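/- arXiv:2103.08352 — 4 statements merged into one kernel-verified Lean document; each statement's English description precedes it below -/
import Mathlib

section
/- Let q₀ ∈ (0,1), p₀ > 0, s ∈ (1/2, 3/2), and set u₀(x) = p₀(e^{-|x+q₀|} − e^{-|x−q₀|}). There exists a constant C = C_s > 0, depending only on s, such that C^{-1} p₀ q₀^{3/2−s} ≤ ‖u₀‖_{H^s} ≤ C p₀ q₀^{3/2−s}. -/
open MeasureTheory Real Set

/-- The Fourier transform `f̂(ξ) = ∫ e^{-ixξ} f(x) dx`. -/
noncomputable def fourierTransform (f : ℝ → ℝ) (ξ : ℝ) : ℂ :=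
  ∫ x : ℝ, Complex.exp (-(Complex.I * x * ξ)) * (f x : ℂ)

/-- The squared Sobolev norm `‖f‖_{H^s}² = ∫ (1+ξ²)^s |f̂(ξ)|² dξ`. -/
noncomputable def sobolevNormSq (s : ℝ) (f : ℝ → ℝ) : ℝ :=
  ∫ ξ : ℝ, (1 + ξ ^ 2) ^ s * ‖fourierTransform f ξ‖ ^ 2

/-- The Sobolev norm `‖f‖_{H^s}`. -/
noncomputable def sobolevNorm (s : ℝ) (f : ℝ → ℝ) : ℝ :=
  Real.sqrt (sobolevNormSq s f)

lemma integral_cexp_neg_mul_Ioi0 {c : ℂ} (hc : 0 < c.re) :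
    ∫ x : ℝ in Ioi (0:ℝ), Complex.exp (-(c * x)) = 1 / c := by
  have hc0 : c ≠ 0 := by
    intro h; rw [h] at hc; simp at hc
  have hderiv : ∀ x ∈ Ici (0:ℝ),
      HasDerivAt (fun x : ℝ => -Complex.exp (-(c * x)) / c) (Complex.exp (-(c * x))) x := by
    intro x _
    have h1 : HasDerivAt (fun x : ℝ => (x : ℂ)) 1 x := by
      simpa using (hasDerivAt_id x).ofReal_comp
    have h2 : HasDerivAt (fun x : ℝ => -(c * (x:ℂ))) (-c) x := by
      have := (h1.const_mul c).neg; simp only [mul_one] at this; exact this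
    have h3 := h2.cexp
    have h4 : HasDerivAt (fun x : ℝ => -Complex.exp (-(c * x)) / c) (-(Complex.exp (-(c * x)) * -c) / c) x := (h3.neg).div_const c
    convert h4 using 1
    field_simp
  have hint : IntegrableOn (fun x : ℝ => Complex.exp (-(c * x))) (Ioi (0:ℝ)) := by
    refine (exp_neg_integrableOn_Ioi 0 hc).mono' ?_ ?_
    · exact (Complex.continuous_exp.comp (by continuity)).aestronglyMeasurable
    · filter_upwards with x
      simp [Complex.norm_exp, neg_mul]
  have htend : Filter.Tendsto (fun x : ℝ => -Complex.exp (-(c * x)) / c)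
      Filter.atTop (nhds 0) := by
    have h0 : Filter.Tendsto (fun x : ℝ => Complex.exp (-(c * x))) Filter.atTop (nhds 0) := by
      rw [tendsto_zero_iff_norm_tendsto_zero]
      have : (fun x : ℝ => ‖Complex.exp (-(c * x))‖) = fun x : ℝ => Real.exp (-(c.re * x)) := by
        funext x; simp [Complex.norm_exp]
      rw [this]
      exact Real.tendsto_exp_atBot.comp
        (Filter.tendsto_neg_atBot_iff.mpr ((Filter.tendsto_const_mul_atTop_of_pos hc).mpr Filter.tendsto_id))
    simpa using (h0.neg).div_const c
  have := integral_Ioi_of_hasDerivAt_of_tendsto' hderiv hint htend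
  rw [this]
  simp [neg_div]

lemma integrable_aux (a ξ : ℝ) :
    Integrable (fun x : ℝ => Complex.exp (-(Complex.I * x * ξ)) * (Real.exp (-|x - a|) : ℂ)) := by
  have hexp : Integrable (fun x : ℝ => Real.exp (-|x - a|)) := by
    have h1 : Integrable (fun x : ℝ => Real.exp (-|x|)) := by
      rw [← integrableOn_univ, ← Set.Iic_union_Ioi (a := (0:ℝ))]
      apply IntegrableOn.union
      · have : EqOn (fun x : ℝ => Real.exp (-|x|)) Real.exp (Iic 0) := by
          intro x hx
          simp only [mem_Iic] at hx
          simp [abs_of_nonpos hx]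
        exact (integrableOn_exp_Iic 0).congr_fun this.symm measurableSet_Iic
      · have : EqOn (fun x : ℝ => Real.exp (-|x|)) (fun x => Real.exp (-1 * x)) (Ioi 0) := by
          intro x hx
          simp only [mem_Ioi] at hx
          simp [abs_of_nonneg hx.le]
        exact (exp_neg_integrableOn_Ioi 0 one_pos).congr_fun this.symm measurableSet_Ioi
    have := h1.comp_sub_right a
    simpa using this
  refine hexp.mono' ?_ ?_
  · apply Continuous.aestronglyMeasurable
    exact (Complex.continuous_exp.comp (by continuity)).mul
      (Complex.continuous_ofReal.comp (by continuity))
  · filter_upwards with x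
    simp [Complex.norm_exp, abs_of_nonneg (Real.exp_pos _).le]

lemma fourier_exp_abs (ξ : ℝ) :
    ∫ x : ℝ, Complex.exp (-(Complex.I * x * ξ)) * (Real.exp (-|x|) : ℂ)
      = 2 / (1 + ξ ^ 2) := by
  have hint : Integrable (fun x : ℝ => Complex.exp (-(Complex.I * x * ξ)) * (Real.exp (-|x|) : ℂ)) := by
    simpa using integrable_aux 0 ξ
  set f : ℝ → ℂ := fun x => Complex.exp (-(Complex.I * x * ξ)) * (Real.exp (-|x|) : ℂ) with hf
  have hsplit : ∫ x : ℝ, f x = (∫ x in Iic (0:ℝ), f x) + ∫ x in Ioi (0:ℝ), f x :=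
    (intervalIntegral.integral_Iic_add_Ioi hint.integrableOn hint.integrableOn).symm
  have hIoi : ∫ x in Ioi (0:ℝ), f x = 1 / (1 + Complex.I * ξ) := by
    rw [show (1:ℂ) / (1 + Complex.I * ξ) = ∫ x : ℝ in Ioi (0:ℝ),
        Complex.exp (-((1 + Complex.I * ξ) * x)) from
      (integral_cexp_neg_mul_Ioi0 (by simp)).symm]
    refine setIntegral_congr_fun measurableSet_Ioi (fun x hx => ?_)
    have hx0 : (0:ℝ) ≤ x := (le_of_lt hx)
    rw [hf]
    simp only [abs_of_nonneg hx0]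
    rw [Complex.ofReal_exp, ← Complex.exp_add]
    congr 1
    push_cast
    ring
  have hIic : ∫ x in Iic (0:ℝ), f x = 1 / (1 - Complex.I * ξ) := by
    have := integral_comp_neg_Ioi (0:ℝ) f
    simp only [neg_zero] at this
    rw [← this]
    rw [show (1:ℂ) / (1 - Complex.I * ξ) = ∫ x : ℝ in Ioi (0:ℝ),
        Complex.exp (-((1 - Complex.I * ξ) * x)) from
      (integral_cexp_neg_mul_Ioi0 (by simp)).symm]
    refine setIntegral_congr_fun measurableSet_Ioi (fun x hx => ?_)
    have hx0 : (0:ℝ) ≤ x := (le_of_lt hx)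
    rw [hf]
    simp only [abs_neg, abs_of_nonneg hx0]
    rw [Complex.ofReal_exp, ← Complex.exp_add]
    congr 1
    push_cast
    ring
  rw [hsplit, hIic, hIoi]
  have h1 : (1:ℂ) - Complex.I * ξ ≠ 0 := by
    intro h
    have := congrArg Complex.re h
    simp at this
  have h2 : (1:ℂ) + Complex.I * ξ ≠ 0 := by
    intro h
    have := congrArg Complex.re h
    simp at this
  have h3 : ((1:ℂ) + (ξ:ℂ) ^ 2) ≠ 0 := by
    have hr : (1 + ξ ^ 2 : ℝ) ≠ 0 := by positivity
    exact_mod_cast hr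
  field_simp
  ring_nf
  rw [Complex.I_sq]
  ring

lemma fourier_shift (a ξ : ℝ) :
    ∫ x : ℝ, Complex.exp (-(Complex.I * x * ξ)) * (Real.exp (-|x - a|) : ℂ)
      = Complex.exp (-(Complex.I * a * ξ)) * (2 / (1 + ξ ^ 2)) := by
  have hshift := MeasureTheory.integral_add_right_eq_self
    (μ := volume) (fun x : ℝ => Complex.exp (-(Complex.I * x * ξ)) * (Real.exp (-|x - a|) : ℂ)) a
  rw [← hshift]
  have : (fun x : ℝ => Complex.exp (-(Complex.I * ((x + a : ℝ) : ℂ) * ξ)) * ((Real.exp (-|x + a - a|) : ℝ) : ℂ))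
      = fun x : ℝ => Complex.exp (-(Complex.I * a * ξ))
          * (Complex.exp (-(Complex.I * x * ξ)) * (Real.exp (-|x|) : ℂ)) := by
    funext x
    rw [show x + a - a = x by ring, ← mul_assoc, ← Complex.exp_add]
    congr 2
    push_cast
    ring
  rw [this, MeasureTheory.integral_const_mul, fourier_exp_abs]

lemma fourier_u0 (p q ξ : ℝ) :
    fourierTransform (fun x => p * (Real.exp (-|x + q|) - Real.exp (-|x - q|))) ξ
      = (p : ℂ) * ((Complex.exp (Complex.I * q * ξ) - Complex.exp (-(Complex.I * q * ξ)))
          * (2 / (1 + (ξ:ℂ) ^ 2))) := by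
  unfold fourierTransform
  have heq : (fun x : ℝ => Complex.exp (-(Complex.I * x * ξ))
        * ((p * (Real.exp (-|x + q|) - Real.exp (-|x - q|)) : ℝ) : ℂ))
      = fun x : ℝ => (p:ℂ) * (Complex.exp (-(Complex.I * x * ξ)) * (Real.exp (-|x - (-q)|) : ℂ)
          - Complex.exp (-(Complex.I * x * ξ)) * (Real.exp (-|x - q|) : ℂ)) := by
    funext x
    rw [show x - (-q) = x + q by ring]
    push_cast
    ring
  rw [heq, MeasureTheory.integral_const_mul,
    MeasureTheory.integral_sub (integrable_aux (-q) ξ) (integrable_aux q ξ),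
    fourier_shift, fourier_shift]
  congr 1
  rw [sub_mul]
  congr 2
  · congr 1
    push_cast
    ring

lemma abs_sq_fourier_u0 (p q ξ : ℝ) :
    ‖fourierTransform (fun x => p * (Real.exp (-|x + q|) - Real.exp (-|x - q|))) ξ‖ ^ 2
      = 16 * p ^ 2 * Real.sin (q * ξ) ^ 2 / (1 + ξ ^ 2) ^ 2 := by
  rw [fourier_u0]
  have hsin : Complex.exp (Complex.I * q * ξ) - Complex.exp (-(Complex.I * q * ξ))
      = 2 * Complex.I * Complex.sin ((q * ξ : ℝ) : ℂ) := by
    rw [Complex.sin]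
    push_cast
    have hI : Complex.I * Complex.I = -1 := Complex.I_mul_I
    field_simp
    ring_nf
    rw [Complex.I_sq]
    ring
  rw [hsin]
  rw [norm_mul, norm_mul, norm_mul, norm_div, norm_mul]
  have h1 : ‖(1:ℂ) + (ξ:ℂ) ^ 2‖ = 1 + ξ ^ 2 := by
    rw [show (1:ℂ) + (ξ:ℂ)^2 = ((1 + ξ^2 : ℝ) : ℂ) by push_cast; ring, Complex.norm_real, Real.norm_eq_abs]
    exact abs_of_pos (by positivity)
  have h2 : ‖Complex.sin ((q * ξ : ℝ) : ℂ)‖ = |Real.sin (q * ξ)| := by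
    rw [← Complex.ofReal_sin, Complex.norm_real, Real.norm_eq_abs]
  rw [h1, h2]
  simp [Complex.norm_real, Complex.norm_two]
  rw [show (|p| * (2 * |Real.sin (q * ξ)| * (2 / (1 + ξ ^ 2)))) ^ 2
      = |p| ^ 2 * |Real.sin (q * ξ)| ^ 2 * 4 / (1 + ξ ^ 2) ^ 2 * 4 by rw [mul_pow, mul_pow, mul_pow, div_pow]; ring]
  rw [sq_abs, sq_abs]
  ring

lemma one_add_sq_rpow_le {s : ℝ} (hs : s ≤ 2) (ξ : ℝ) :
    (1 + ξ ^ 2) ^ (s - 2) ≤ 2 ^ (2 - s) * (1 + |ξ|) ^ (-(4 - 2 * s)) := by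
  have hA : (0:ℝ) < 1 + ξ ^ 2 := by positivity
  have hB : (0:ℝ) < 1 + |ξ| := by positivity
  have hBA : (1 + |ξ|) ^ 2 ≤ 2 * (1 + ξ ^ 2) := by
    have := sq_abs ξ
    nlinarith [sq_nonneg (1 - |ξ|), abs_nonneg ξ]
  have key : ((1 + |ξ|) ^ 2 : ℝ) ^ (s - 2) ≥ (2 * (1 + ξ ^ 2)) ^ (s - 2) :=
    Real.antitoneOn_rpow_Ioi_of_exponent_nonpos (by linarith)
      (mem_Ioi.mpr (by positivity)) (mem_Ioi.mpr (by positivity)) hBA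
  have h1 : (2 * (1 + ξ ^ 2) : ℝ) ^ (s - 2) = 2 ^ (s - 2) * (1 + ξ ^ 2) ^ (s - 2) :=
    Real.mul_rpow (by norm_num) hA.le
  have h2 : ((1 + |ξ|) ^ 2 : ℝ) ^ (s - 2) = (1 + |ξ|) ^ (-(4 - 2 * s)) := by
    rw [← Real.rpow_natCast (1 + |ξ|) 2, ← Real.rpow_mul hB.le]
    norm_num
    ring_nf
  rw [h2, h1] at key
  have h3 : (0:ℝ) < 2 ^ (s - 2) := Real.rpow_pos_of_pos two_pos _
  have h4 : (2:ℝ) ^ (2 - s) * 2 ^ (s - 2) = 1 := by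
    rw [← Real.rpow_add two_pos]; norm_num
  calc (1 + ξ ^ 2) ^ (s - 2)
      = 2 ^ (2 - s) * (2 ^ (s - 2) * (1 + ξ ^ 2) ^ (s - 2)) := by
        rw [← mul_assoc, h4, one_mul]
    _ ≤ 2 ^ (2 - s) * (1 + |ξ|) ^ (-(4 - 2 * s)) := by
        apply mul_le_mul_of_nonneg_left key (Real.rpow_nonneg (by norm_num) _)

lemma integrable_g {s : ℝ} (hs2 : s < 3/2) (q : ℝ) :
    Integrable (fun ξ : ℝ => (1 + ξ ^ 2) ^ (s - 2) * Real.sin (q * ξ) ^ 2) := by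
  have h0 : Integrable (fun ξ : ℝ => ((1:ℝ) + ‖ξ‖) ^ (-(4 - 2*s))) := by
    apply integrable_one_add_norm (E := ℝ)
    rw [Module.finrank_self]
    push_cast; linarith
  refine ((h0.const_mul ((2:ℝ) ^ (2 - s))).mono' ?_ ?_)
  · apply Continuous.aestronglyMeasurable
    apply Continuous.mul
    · exact ((continuous_const (y := (1:ℝ))).add (continuous_pow 2)).rpow_const
        (fun x => Or.inl (by simp only [Pi.add_apply]; positivity))
    · exact ((Real.continuous_sin.comp (continuous_const.mul continuous_id)).pow 2)
  · filter_upwards with ξ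
    have h1 : (0:ℝ) ≤ (1 + ξ ^ 2) ^ (s - 2) := Real.rpow_nonneg (by positivity) _
    have h2 : Real.sin (q * ξ) ^ 2 ≤ 1 := Real.sin_sq_le_one _
    rw [Real.norm_eq_abs, abs_of_nonneg (by positivity)]
    calc (1 + ξ ^ 2) ^ (s - 2) * Real.sin (q * ξ) ^ 2
        ≤ (1 + ξ ^ 2) ^ (s - 2) * 1 := by
          exact mul_le_mul_of_nonneg_left h2 h1
      _ = (1 + ξ ^ 2) ^ (s - 2) := mul_one _
      _ ≤ 2 ^ (2 - s) * (1 + |ξ|) ^ (-(4 - 2 * s)) := one_add_sq_rpow_le (by linarith) ξ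
      _ = 2 ^ (2 - s) * (1 + ‖ξ‖) ^ (-(4 - 2 * s)) := by rw [Real.norm_eq_abs]

lemma J_even {s q : ℝ} :
    ∫ ξ : ℝ, (1 + ξ ^ 2) ^ (s - 2) * Real.sin (q * ξ) ^ 2
      = 2 * ∫ t in Ioi (0:ℝ), (1 + t ^ 2) ^ (s - 2) * Real.sin (q * t) ^ 2 := by
  rw [← integral_comp_abs
    (f := fun t : ℝ => (1 + t ^ 2) ^ (s - 2) * Real.sin (q * t) ^ 2)]
  congr 1
  funext x
  rcases abs_choice x with h | h
  · rw [h]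
  · rw [h]
    simp [neg_sq, mul_neg, Real.sin_neg]

lemma rpow_sq_le {s t : ℝ} (hs : s ≤ 2) (ht : 0 < t) :
    (1 + t ^ 2) ^ (s - 2) ≤ t ^ (2 * s - 4) := by
  have h1 : (1 + t ^ 2 : ℝ) ^ (s - 2) ≤ (t ^ 2 : ℝ) ^ (s - 2) :=
    Real.antitoneOn_rpow_Ioi_of_exponent_nonpos (by linarith)
      (mem_Ioi.mpr (by positivity)) (mem_Ioi.mpr (by positivity)) (by nlinarith)
  have h2 : (t ^ 2 : ℝ) ^ (s - 2) = t ^ (2 * s - 4) := by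
    rw [← Real.rpow_natCast t 2, ← Real.rpow_mul ht.le]
    norm_num
    ring_nf
  linarith [h1, h2.le, h2.ge]

lemma sin_sq_le_mul_sq (q t : ℝ) : Real.sin (q * t) ^ 2 ≤ q ^ 2 * t ^ 2 := by
  have := Real.sin_sq_le_sq (x := q * t)
  nlinarith [this]

lemma J_upper {s q : ℝ} (hs1 : 1/2 < s) (hs2 : s < 3/2) (hq0 : 0 < q) (hq1 : q < 1) :
    ∫ ξ : ℝ, (1 + ξ ^ 2) ^ (s - 2) * Real.sin (q * ξ) ^ 2
      ≤ (2 + 2 / (2 * s - 1) + 2 / (3 - 2 * s)) * q ^ (3 - 2 * s) := by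
  set g : ℝ → ℝ := fun t => (1 + t ^ 2) ^ (s - 2) * Real.sin (q * t) ^ 2 with hg
  have hgint : Integrable g := integrable_g hs2 q
  set R : ℝ := 1 / q with hR
  have hR0 : (0:ℝ) < R := by positivity
  have hR1 : (1:ℝ) ≤ R := by
    rw [hR, le_div_iff₀ hq0]; linarith
  have hsplit1 : ∫ t in Ioi (0:ℝ), g t = (∫ t in Ioc (0:ℝ) R, g t) + ∫ t in Ioi R, g t := by
    rw [← setIntegral_union (Ioc_disjoint_Ioi le_rfl) measurableSet_Ioi
      hgint.integrableOn hgint.integrableOn, Ioc_union_Ioi_eq_Ioi hR0.le]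
  have hsplit2 : ∫ t in Ioc (0:ℝ) R, g t = (∫ t in Ioc (0:ℝ) 1, g t) + ∫ t in Ioc (1:ℝ) R, g t := by
    rw [← setIntegral_union (Ioc_disjoint_Ioc.mpr (by simpa using inf_le_left)) measurableSet_Ioc
      hgint.integrableOn hgint.integrableOn, Ioc_union_Ioc_eq_Ioc zero_le_one hR1]
  -- piece 1
  have hp1 : ∫ t in Ioc (0:ℝ) 1, g t ≤ q ^ (3 - 2*s) := by
    have hb : ∫ t in Ioc (0:ℝ) 1, g t ≤ ∫ _t in Ioc (0:ℝ) 1, q ^ 2 := by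
      apply setIntegral_mono_on hgint.integrableOn ((integrableOn_const_iff).mpr (Or.inr (by simp)))
        measurableSet_Ioc
      intro t ht
      rw [hg]
      have h1 : (1 + t ^ 2 : ℝ) ^ (s - 2) ≤ 1 :=
        Real.rpow_le_one_of_one_le_of_nonpos (by nlinarith [sq_nonneg t]) (by linarith)
      have h2 : Real.sin (q * t) ^ 2 ≤ q ^ 2 * t ^ 2 := sin_sq_le_mul_sq q t
      have ht2 : t ^ 2 ≤ 1 := by nlinarith [ht.1, ht.2]
      have h3 : q ^ 2 * t ^ 2 ≤ q ^ 2 := by nlinarith [sq_nonneg q]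
      calc (1 + t ^ 2) ^ (s - 2) * Real.sin (q * t) ^ 2
          ≤ 1 * (q ^ 2) := by
            apply mul_le_mul h1 (h2.trans h3) (sq_nonneg _)
            norm_num
        _ = q ^ 2 := one_mul _
    have hc : ∫ _t in Ioc (0:ℝ) 1, (q ^ 2 : ℝ) = q ^ 2 := by
      simp [Real.volume_Ioc]
    have hd : q ^ 2 ≤ q ^ (3 - 2*s) := by
      rw [← Real.rpow_natCast q 2]
      apply Real.rpow_le_rpow_of_exponent_ge hq0 hq1.le
      push_cast; linarith
    linarith
  -- rpow helpers
  have hRy : ∀ y : ℝ, R ^ y = q ^ (-y) := by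
    intro y
    rw [hR, one_div, Real.inv_rpow hq0.le, ← Real.rpow_neg hq0.le]
  have hq2 : (q:ℝ) ^ 2 = q ^ (2:ℝ) := by
    rw [← Real.rpow_natCast q 2]; norm_num
  -- piece 2
  have hmaj2 : IntegrableOn (fun t : ℝ => q ^ 2 * t ^ (2*s - 2)) (Ioc (1:ℝ) R) := by
    have := (intervalIntegral.intervalIntegrable_rpow' (a := 1) (b := R)
      (r := 2*s - 2) (by linarith)).const_mul (q ^ 2)
    exact this.1
  have hp2 : ∫ t in Ioc (1:ℝ) R, g t ≤ q ^ (3 - 2*s) / (2 * s - 1) := by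
    have hb : ∫ t in Ioc (1:ℝ) R, g t ≤ ∫ t in Ioc (1:ℝ) R, q ^ 2 * t ^ (2*s - 2) := by
      apply setIntegral_mono_on hgint.integrableOn hmaj2 measurableSet_Ioc
      intro t ht
      have ht0 : (0:ℝ) < t := lt_of_lt_of_le one_pos ht.1.le
      have h1 : (1 + t ^ 2 : ℝ) ^ (s - 2) ≤ t ^ (2*s - 4) := rpow_sq_le (by linarith) ht0
      have h2 : Real.sin (q * t) ^ 2 ≤ q ^ 2 * t ^ 2 := sin_sq_le_mul_sq q t
      have h4 : (0:ℝ) ≤ t ^ (2*s - 4) := Real.rpow_nonneg ht0.le _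
      calc (1 + t ^ 2) ^ (s - 2) * Real.sin (q * t) ^ 2
          ≤ t ^ (2*s - 4) * (q ^ 2 * t ^ 2) := by
            apply mul_le_mul h1 h2 (sq_nonneg _) h4
        _ = q ^ 2 * (t ^ (2*s - 4) * t ^ (2:ℝ)) := by
            rw [Real.rpow_two]; ring
        _ = q ^ 2 * t ^ (2*s - 2) := by
            rw [← Real.rpow_add ht0]; congr 1; ring
    have hval : ∫ t in Ioc (1:ℝ) R, q ^ 2 * t ^ (2*s - 2)
        = q ^ 2 * ((R ^ (2*s - 1) - 1) / (2*s - 1)) := by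
      rw [← intervalIntegral.integral_of_le hR1, intervalIntegral.integral_const_mul,
        integral_rpow (Or.inl (by linarith))]
      have h1 : 2*s - 2 + 1 = 2*s - 1 := by ring
      rw [h1, Real.one_rpow]
    have hle : q ^ 2 * ((R ^ (2*s - 1) - 1) / (2*s - 1)) ≤ q ^ (3 - 2*s) / (2 * s - 1) := by
      have h21 : (0:ℝ) < 2*s - 1 := by linarith
      have : q ^ 2 * (R ^ (2*s - 1) - 1) ≤ q ^ (3 - 2*s) := by
        have hRministep : q ^ 2 * (R ^ (2*s - 1) - 1) ≤ q ^ 2 * R ^ (2*s - 1) := by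
          have : (0:ℝ) ≤ q ^ 2 := sq_nonneg q
          nlinarith
        have heq : q ^ 2 * R ^ (2*s - 1) = q ^ (3 - 2*s) := by
          rw [hRy, hq2, ← Real.rpow_add hq0]
          congr 1; ring
        linarith
      calc q ^ 2 * ((R ^ (2*s - 1) - 1) / (2*s - 1))
          = q ^ 2 * (R ^ (2*s - 1) - 1) / (2*s - 1) := by ring
        _ ≤ q ^ (3 - 2*s) / (2 * s - 1) := by gcongr
    linarith
  -- piece 3
  have hmaj3 : IntegrableOn (fun t : ℝ => t ^ (2*s - 4)) (Ioi R) :=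
    integrableOn_Ioi_rpow_of_lt (by linarith) hR0
  have hp3 : ∫ t in Ioi R, g t ≤ q ^ (3 - 2*s) / (3 - 2*s) := by
    have hb : ∫ t in Ioi R, g t ≤ ∫ t in Ioi R, t ^ (2*s - 4) := by
      apply setIntegral_mono_on hgint.integrableOn hmaj3 measurableSet_Ioi
      intro t ht
      have ht0 : (0:ℝ) < t := lt_trans hR0 ht
      have h1 : (1 + t ^ 2 : ℝ) ^ (s - 2) ≤ t ^ (2*s - 4) := rpow_sq_le (by linarith) ht0
      have h2 : Real.sin (q * t) ^ 2 ≤ 1 := Real.sin_sq_le_one _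
      calc (1 + t ^ 2) ^ (s - 2) * Real.sin (q * t) ^ 2
          ≤ (1 + t ^ 2) ^ (s - 2) * 1 :=
            mul_le_mul_of_nonneg_left h2 (Real.rpow_nonneg (by positivity) _)
        _ = (1 + t ^ 2) ^ (s - 2) := mul_one _
        _ ≤ t ^ (2*s - 4) := h1
    have hval : ∫ t in Ioi R, t ^ (2*s - 4) = q ^ (3 - 2*s) / (3 - 2*s) := by
      rw [integral_Ioi_rpow_of_lt (by linarith) hR0]
      rw [show 2*s - 4 + 1 = 2*s - 3 by ring, hRy, show -(2*s - 3) = 3 - 2*s by ring]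
      ring_nf
      rw [show (-3 + s*2 : ℝ) = -(3 - s*2) by ring, inv_neg]
      ring
    linarith
  -- conclusion
  rw [J_even, hsplit1, hsplit2]
  have h3s : (0:ℝ) < 3 - 2*s := by linarith
  have h2s : (0:ℝ) < 2*s - 1 := by linarith
  have hqpos : (0:ℝ) < q ^ (3 - 2*s) := Real.rpow_pos_of_pos hq0 _
  calc 2 * ((∫ t in Ioc (0:ℝ) 1, g t) + (∫ t in Ioc (1:ℝ) R, g t) + ∫ t in Ioi R, g t)
      ≤ 2 * (q ^ (3 - 2*s) + q ^ (3 - 2*s) / (2*s - 1) + q ^ (3 - 2*s) / (3 - 2*s)) := by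
        linarith
    _ = (2 + 2 / (2 * s - 1) + 2 / (3 - 2 * s)) * q ^ (3 - 2*s) := by
        field_simp

lemma J_lower {s q : ℝ} (hs1 : 1/2 < s) (hs2 : s < 3/2) (hq0 : 0 < q) (hq1 : q < 1) :
    3 / 8 * 2 ^ (s - 2) * q ^ (3 - 2 * s)
      ≤ ∫ ξ : ℝ, (1 + ξ ^ 2) ^ (s - 2) * Real.sin (q * ξ) ^ 2 := by
  set g : ℝ → ℝ := fun t => (1 + t ^ 2) ^ (s - 2) * Real.sin (q * t) ^ 2 with hg
  have hgint : Integrable g := integrable_g hs2 q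
  set R : ℝ := 1 / q with hR
  have hR0 : (0:ℝ) < R := by positivity
  have hsplit1 : ∫ t in Ioi (0:ℝ), g t = (∫ t in Ioc (0:ℝ) R, g t) + ∫ t in Ioi R, g t := by
    rw [← setIntegral_union (Ioc_disjoint_Ioi le_rfl) measurableSet_Ioi
      hgint.integrableOn hgint.integrableOn, Ioc_union_Ioi_eq_Ioi hR0.le]
  have htail : (0:ℝ) ≤ ∫ t in Ioi R, g t := by
    apply setIntegral_nonneg measurableSet_Ioi
    intro t _
    exact mul_nonneg (Real.rpow_nonneg (by positivity) _) (sq_nonneg _)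
  set c : ℝ := (2 / q ^ 2) ^ (s - 2) with hc
  have hcpos : (0:ℝ) < c := Real.rpow_pos_of_pos (by positivity) _
  have hlow : ∫ t in Ioc (0:ℝ) R, c * (9/16 * q ^ 2 * t ^ 2) ≤ ∫ t in Ioc (0:ℝ) R, g t := by
    apply setIntegral_mono_on ?_ hgint.integrableOn measurableSet_Ioc
    · intro t ht
      have ht0 : (0:ℝ) < t := ht.1
      have htR : t ≤ R := ht.2
      have hqt1 : q * t ≤ 1 := by
        rw [hR] at htR
        calc q * t ≤ q * (1/q) := by apply mul_le_mul_of_nonneg_left htR hq0.le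
          _ = 1 := by field_simp
      have hqt0 : 0 < q * t := mul_pos hq0 ht0
      -- sin bound
      have hsin : 3/4 * (q * t) ≤ Real.sin (q * t) := by
        have h1 := Real.sin_gt_sub_cube hqt0
        have h3 : (q*t)^2 ≤ 1 := by nlinarith
        have h2 : (q*t)^3 ≤ q*t := by nlinarith
        linarith
      have hsinsq : 9/16 * q^2 * t^2 ≤ Real.sin (q * t) ^ 2 := by
        have h0 : (0:ℝ) ≤ 3/4 * (q*t) := by positivity
        have := pow_le_pow_left₀ h0 hsin 2
        calc 9/16 * q^2 * t^2 = (3/4 * (q*t))^2 := by ring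
          _ ≤ Real.sin (q * t) ^ 2 := this
      -- rpow bound
      have hbase : 1 + t^2 ≤ 2 / q^2 := by
        have ht2 : t^2 ≤ 1/q^2 := by
          have h1 : t^2 ≤ R^2 := by nlinarith
          have hR2 : R^2 = 1/q^2 := by rw [hR]; field_simp
          linarith [hR2 ▸ h1]
        have hq2le : (1:ℝ) ≤ 1/q^2 := by
          rw [le_div_iff₀ (by positivity)]; nlinarith
        calc 1 + t^2 ≤ 1/q^2 + 1/q^2 := add_le_add hq2le ht2
          _ = 2/q^2 := by ring
      have hrpow : c ≤ (1 + t ^ 2) ^ (s - 2) := by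
        apply Real.antitoneOn_rpow_Ioi_of_exponent_nonpos (by linarith)
          (mem_Ioi.mpr (by positivity)) (mem_Ioi.mpr (by positivity)) hbase
      exact mul_le_mul hrpow hsinsq (by positivity) (Real.rpow_nonneg (by positivity) _)
    · apply Continuous.integrableOn_Ioc
      continuity
  have hval : ∫ t in Ioc (0:ℝ) R, c * (9/16 * q ^ 2 * t ^ 2) = c * (9/16 * q^2 * (R^3/3)) := by
    rw [← intervalIntegral.integral_of_le hR0.le]
    rw [show (fun t : ℝ => c * (9/16 * q ^ 2 * t ^ 2)) = fun t : ℝ => (c * (9/16 * q^2)) * t ^ 2 by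
      funext t; ring]
    rw [intervalIntegral.integral_const_mul, integral_pow]
    push_cast
    ring
  -- compute the constant
  have hq24 : ((q:ℝ)^2) ^ (s-2) = q ^ (2*s - 4) := by
    rw [← Real.rpow_natCast q 2, ← Real.rpow_mul hq0.le]
    congr 1; push_cast; ring
  have hc2 : c = 2 ^ (s-2) * q ^ (4 - 2*s) := by
    rw [hc, Real.div_rpow (by norm_num) (by positivity), hq24, div_eq_mul_inv,
      ← Real.rpow_neg hq0.le]
    congr 1; ring
  have hR3 : R^3 = q ^ (-3:ℝ) := by
    rw [hR, Real.rpow_neg hq0.le, show ((3:ℝ)) = ((3:ℕ):ℝ) by norm_num, Real.rpow_natCast]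
    field_simp
  have hqprod : q ^ (4-2*s) * q ^ ((2:ℕ):ℝ) * q ^ (-3:ℝ) = q ^ (3-2*s) := by
    rw [← Real.rpow_add hq0, ← Real.rpow_add hq0]
    congr 1; push_cast; ring
  have hkey : c * (9/16 * q^2 * (R^3/3)) = 3/16 * 2 ^ (s - 2) * q ^ (3 - 2*s) := by
    rw [hc2, hR3, ← Real.rpow_natCast q 2, ← hqprod]
    ring
  have hJ : (∫ ξ : ℝ, g ξ) = 2 * ∫ t in Ioi (0:ℝ), g t := J_even
  have hmain : 3/16 * 2 ^ (s - 2) * q ^ (3 - 2*s) ≤ ∫ t in Ioc (0:ℝ) R, g t := by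
    rw [← hkey, ← hval]; exact hlow
  rw [hJ, hsplit1]
  linarith

lemma sobolevNormSq_eq (s p q : ℝ) :
    sobolevNormSq s (fun x => p * (Real.exp (-|x + q|) - Real.exp (-|x - q|)))
      = 16 * p ^ 2 * ∫ ξ : ℝ, (1 + ξ ^ 2) ^ (s - 2) * Real.sin (q * ξ) ^ 2 := by
  unfold sobolevNormSq
  rw [← MeasureTheory.integral_const_mul]
  congr 1
  funext ξ
  rw [abs_sq_fourier_u0]
  have hpos : (0:ℝ) < 1 + ξ ^ 2 := by positivity
  have hrw : (1 + ξ ^ 2 : ℝ) ^ (s - 2) = (1 + ξ ^ 2) ^ s / (1 + ξ ^ 2) ^ 2 := by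
    rw [Real.rpow_sub hpos, Real.rpow_two]
  rw [hrw]
  field_simp


/-- For `s ∈ (1/2, 3/2)` there is a constant `C = C_s > 0` depending only on `s` such that
for every `p₀ > 0` and `q₀ ∈ (0,1)`, the function
`u₀(x) = p₀ (e^{-|x+q₀|} - e^{-|x-q₀|})` satisfies
`C⁻¹ p₀ q₀^{3/2-s} ≤ ‖u₀‖_{H^s} ≤ C p₀ q₀^{3/2-s}`. -/
theorem sobolev_norm_u0_two_sided (s : ℝ) (hs : s ∈ Ioo (1 / 2 : ℝ) (3 / 2)) :
    ∃ C : ℝ, 0 < C ∧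
      ∀ p₀ q₀ : ℝ, 0 < p₀ → q₀ ∈ Ioo (0 : ℝ) 1 →
        C⁻¹ * (p₀ * q₀ ^ (3 / 2 - s)) ≤
            sobolevNorm s (fun x => p₀ * (Real.exp (-|x + q₀|) - Real.exp (-|x - q₀|))) ∧
          sobolevNorm s (fun x => p₀ * (Real.exp (-|x + q₀|) - Real.exp (-|x - q₀|))) ≤
            C * (p₀ * q₀ ^ (3 / 2 - s)) := by
  obtain ⟨hs1, hs2⟩ := hs
  set c₁ : ℝ := 3 / 8 * 2 ^ (s - 2) with hc₁
  set c₂ : ℝ := 2 + 2 / (2 * s - 1) + 2 / (3 - 2 * s) with hc₂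
  have hc₁pos : 0 < c₁ := by
    have := Real.rpow_pos_of_pos (two_pos (α := ℝ)) (s - 2)
    positivity
  have hc₂pos : 0 < c₂ := by
    have h1 : (0:ℝ) < 2 * s - 1 := by linarith
    have h2 : (0:ℝ) < 3 - 2 * s := by linarith
    positivity
  refine ⟨max (4 * Real.sqrt c₂) (4 * Real.sqrt c₁)⁻¹, ?_, ?_⟩
  · apply lt_max_of_lt_left
    positivity
  intro p₀ q₀ hp ⟨hq0, hq1⟩
  set u₀ : ℝ → ℝ := fun x => p₀ * (Real.exp (-|x + q₀|) - Real.exp (-|x - q₀|)) with hu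
  have hq3s : (0:ℝ) < q₀ ^ (3 - 2 * s) := Real.rpow_pos_of_pos hq0 _
  have hJl := J_lower hs1 hs2 hq0 hq1
  have hJu := J_upper hs1 hs2 hq0 hq1
  have hSS := sobolevNormSq_eq s p₀ q₀
  -- the key sqrt computation
  have hsqrt : ∀ c : ℝ, 0 ≤ c →
      Real.sqrt (16 * p₀ ^ 2 * (c * q₀ ^ (3 - 2 * s)))
        = 4 * Real.sqrt c * (p₀ * q₀ ^ (3/2 - s)) := by
    intro c hcn
    rw [show 16 * p₀ ^ 2 * (c * q₀ ^ (3 - 2 * s)) = (4 * p₀)^2 * (c * q₀ ^ (3 - 2*s)) by ring]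
    rw [Real.sqrt_mul (sq_nonneg _), Real.sqrt_sq (by positivity),
      Real.sqrt_mul hcn, Real.sqrt_eq_rpow (q₀ ^ (3 - 2*s)), ← Real.rpow_mul hq0.le]
    rw [show (3 - 2*s) * (1/2) = 3/2 - s by ring]
    ring
  have hnorm : sobolevNorm s u₀ = Real.sqrt (16 * p₀ ^ 2 *
      ∫ ξ : ℝ, (1 + ξ ^ 2) ^ (s - 2) * Real.sin (q₀ * ξ) ^ 2) := by
    unfold sobolevNorm
    rw [hSS]
  constructor
  · -- lower bound
    have h1 : Real.sqrt (16 * p₀ ^ 2 * (c₁ * q₀ ^ (3 - 2 * s))) ≤ sobolevNorm s u₀ := by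
      rw [hnorm]
      apply Real.sqrt_le_sqrt
      exact mul_le_mul_of_nonneg_left hJl (by positivity)
    rw [hsqrt c₁ hc₁pos.le] at h1
    have h2 : (max (4 * Real.sqrt c₂) (4 * Real.sqrt c₁)⁻¹)⁻¹ ≤ 4 * Real.sqrt c₁ := by
      have hb : (0:ℝ) < (4 * Real.sqrt c₁)⁻¹ := by
        have := Real.sqrt_pos.mpr hc₁pos
        positivity
      calc (max (4 * Real.sqrt c₂) (4 * Real.sqrt c₁)⁻¹)⁻¹
          ≤ ((4 * Real.sqrt c₁)⁻¹)⁻¹ := inv_anti₀ hb (le_max_right _ _)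
        _ = 4 * Real.sqrt c₁ := inv_inv _
    calc (max (4 * Real.sqrt c₂) (4 * Real.sqrt c₁)⁻¹)⁻¹ * (p₀ * q₀ ^ (3/2 - s))
        ≤ 4 * Real.sqrt c₁ * (p₀ * q₀ ^ (3/2 - s)) := by
          apply mul_le_mul_of_nonneg_right h2 (by positivity)
      _ ≤ sobolevNorm s u₀ := h1
  · -- upper bound
    have h1 : sobolevNorm s u₀ ≤ Real.sqrt (16 * p₀ ^ 2 * (c₂ * q₀ ^ (3 - 2 * s))) := by
      rw [hnorm]
      apply Real.sqrt_le_sqrt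
      exact mul_le_mul_of_nonneg_left hJu (by positivity)
    rw [hsqrt c₂ hc₂pos.le] at h1
    calc sobolevNorm s u₀ ≤ 4 * Real.sqrt c₂ * (p₀ * q₀ ^ (3/2 - s)) := h1
      _ ≤ max (4 * Real.sqrt c₂) (4 * Real.sqrt c₁)⁻¹ * (p₀ * q₀ ^ (3/2 - s)) := by
          apply mul_le_mul_of_nonneg_right (le_max_left _ _) (by positivity)
end

section
/- Let q₀ ∈ (0,1) and s ∈ (1/2, 3/2). Then ∫_0^∞ (1+ξ²)^{s−2} sin²(q₀ξ) dξ ≥ (π/2)(1+π²)^{-3/2} q₀^{3−2s}. -/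
open MeasureTheory Real Set

set_option maxHeartbeats 1600000 in
/-- For `q₀ ∈ (0,1)` and `s ∈ (1/2, 3/2)`,
`∫_0^∞ (1+ξ²)^{s-2} sin²(q₀ξ) dξ ≥ (π/2)(1+π²)^{-3/2} q₀^{3-2s}`. -/
theorem integral_lower_bound (q₀ s : ℝ) (hq₀ : q₀ ∈ Ioo (0 : ℝ) 1)
    (hs : s ∈ Ioo (1 / 2 : ℝ) (3 / 2)) :
    (π / 2) * (1 + π ^ 2) ^ (-(3 / 2) : ℝ) * q₀ ^ (3 - 2 * s) ≤
      ∫ ξ in Ioi (0 : ℝ), (1 + ξ ^ 2) ^ (s - 2) * Real.sin (q₀ * ξ) ^ 2 := by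
  obtain ⟨hq0, hq1⟩ := hq₀
  obtain ⟨hs1, hs2⟩ := hs
  have pi_pos := Real.pi_pos
  set f : ℝ → ℝ := fun ξ => (1 + ξ ^ 2) ^ (s - 2) * Real.sin (q₀ * ξ) ^ 2 with hf
  have hfnn : ∀ ξ : ℝ, 0 ≤ f ξ := fun ξ =>
    mul_nonneg (Real.rpow_nonneg (by positivity) _) (sq_nonneg _)
  have hfc : Continuous f := by
    apply Continuous.mul
    · apply Continuous.rpow_const (by continuity)
      intro x; left; positivity
    · exact (Real.continuous_sin.comp (continuous_const.mul continuous_id)).pow 2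
  -- Integrability on Ioi 0
  have hint : IntegrableOn f (Ioi 0) := by
    have h1 : IntegrableOn f (Ioc (0:ℝ) 1) := hfc.integrableOn_Ioc
    have h2 : IntegrableOn f (Ioi (1:ℝ)) := by
      have hmaj : IntegrableOn (fun ξ : ℝ => ξ ^ (2 * s - 4)) (Ioi 1) :=
        integrableOn_Ioi_rpow_of_lt (by linarith) one_pos
      apply Integrable.mono' hmaj (hfc.aestronglyMeasurable.restrict)
      filter_upwards [ae_restrict_mem measurableSet_Ioi] with ξ hξ
      have hξ1 : (1:ℝ) ≤ ξ := le_of_lt hξ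
      rw [Real.norm_eq_abs, abs_of_nonneg (hfnn ξ)]
      have hb1 : f ξ ≤ (1 + ξ ^ 2) ^ (s - 2) := by
        have := (1 + ξ ^ 2) ^ (s - 2)
        calc f ξ ≤ (1 + ξ ^ 2) ^ (s - 2) * 1 := by
              apply mul_le_mul_of_nonneg_left _ (Real.rpow_nonneg (by positivity) _)
              nlinarith [Real.neg_one_le_sin (q₀ * ξ), Real.sin_le_one (q₀ * ξ)]
          _ = (1 + ξ ^ 2) ^ (s - 2) := mul_one _
      refine hb1.trans ?_
      have h2 : (ξ ^ 2 : ℝ) ^ (s - 2) = ξ ^ (2 * s - 4) := by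
        rw [← Real.rpow_natCast ξ 2, ← Real.rpow_mul (by linarith)]
        norm_num; ring_nf
      rw [← h2]
      exact Real.rpow_le_rpow_of_nonpos (by positivity) (by linarith) (by linarith)
    have := h1.union h2
    rwa [Ioc_union_Ioi_eq_Ioi (by norm_num : (0:ℝ) ≤ 1)] at this
  -- the subinterval
  set a : ℝ := π / (4 * q₀) with ha
  set b : ℝ := 3 * π / (4 * q₀) with hb
  have hab : a ≤ b := by
    apply div_le_div_of_nonneg_right ?_ (by positivity)
    · linarith
  have h0a : 0 < a := by positivity
  have hsub : Ioc a b ⊆ Ioi (0:ℝ) := fun x hx => lt_trans h0a hx.1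
  set A : ℝ := 1 + 9 * π ^ 2 / 16 with hA
  have hA0 : (0:ℝ) < A := by positivity
  have hA1 : (1:ℝ) ≤ A := by rw [hA]; nlinarith [sq_nonneg π]
  set B : ℝ := 1 + π ^ 2 with hB
  have hB0 : (0:ℝ) < B := by positivity
  clear_value A B
  set m : ℝ := (A / q₀ ^ 2) ^ (s - 2) * (1 / 2) with hm
  -- pointwise lower bound on Ioc a b
  have hpt : ∀ ξ ∈ Ioc a b, m ≤ f ξ := by
    intro ξ hξ
    obtain ⟨hξa, hξb⟩ := hξ
    have hξ0 : 0 < ξ := lt_trans h0a hξa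
    have hql : π / 4 < q₀ * ξ := by
      have := (div_lt_iff₀ (by positivity : (0:ℝ) < 4 * q₀)).mp hξa
      nlinarith
    have hqu : q₀ * ξ ≤ 3 * π / 4 := by
      have := (le_div_iff₀ (by positivity : (0:ℝ) < 4 * q₀)).mp hξb
      nlinarith
    have hsin : (1:ℝ)/2 ≤ Real.sin (q₀ * ξ) ^ 2 := by
      have hcos : Real.cos (2 * (q₀ * ξ)) ≤ 0 :=
        Real.cos_nonpos_of_pi_div_two_le_of_le (by linarith) (by linarith)
      have h1 := Real.cos_two_mul (q₀ * ξ)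
      have h2 := Real.sin_sq_add_cos_sq (q₀ * ξ)
      nlinarith
    have hbase : (1 + ξ ^ 2) ≤ A / q₀ ^ 2 := by
      rw [le_div_iff₀ (by positivity : (0:ℝ) < q₀ ^ 2)]
      have h1 : (q₀ * ξ) ^ 2 ≤ (3 * π / 4) ^ 2 := by
        rw [sq, sq]
        exact mul_self_le_mul_self (le_of_lt (mul_pos hq0 hξ0)) hqu
      have h2 : q₀ ^ 2 ≤ 1 := by
        rw [sq]
        nlinarith only [hq0, hq1]
      nlinarith only [hA, h1, h2]
    have hrp : (A / q₀ ^ 2) ^ (s - 2) ≤ (1 + ξ ^ 2) ^ (s - 2) :=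
      Real.rpow_le_rpow_of_nonpos (by positivity) hbase (by linarith)
    calc m ≤ (1 + ξ ^ 2) ^ (s - 2) * (1 / 2) :=
          mul_le_mul_of_nonneg_right hrp (by norm_num)
      _ ≤ f ξ := mul_le_mul_of_nonneg_left hsin (Real.rpow_nonneg (by positivity) _)
  -- lower bound via the constant on Ioc a b
  have hstep1 : m * (b - a) ≤ ∫ ξ in Ioc a b, f ξ := by
    have hc : ∫ _ξ in Ioc a b, m = m * (b - a) := by
      rw [setIntegral_const, Real.volume_real_Ioc_of_le hab, smul_eq_mul,
        mul_comm]
    rw [← hc]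
    exact setIntegral_mono_on (integrableOn_const (by
      rw [Real.volume_Ioc]; exact ENNReal.ofReal_ne_top))
      (hint.mono_set hsub) measurableSet_Ioc hpt
  have hstep2 : (∫ ξ in Ioc a b, f ξ) ≤ ∫ ξ in Ioi (0:ℝ), f ξ := by
    apply setIntegral_mono_set hint
    · filter_upwards with x using hfnn x
    · exact HasSubset.Subset.eventuallyLE hsub
  -- algebra: m * (b - a) = (π/4) * A^(s-2) * q₀^(3-2s)
  have hba : b - a = π / (2 * q₀) := by
    rw [ha, hb]; field_simp; ring
  have hq2 : ((q₀:ℝ) ^ 2) ^ (s - 2) = q₀ ^ (2 * s - 4) := by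
    rw [← Real.rpow_natCast q₀ 2, ← Real.rpow_mul hq0.le]
    norm_num; ring_nf
  have hdiv : (A / q₀ ^ 2) ^ (s - 2) = A ^ (s - 2) * q₀ ^ (4 - 2 * s) := by
    rw [Real.div_rpow hA0.le (sq_nonneg q₀), hq2, div_eq_mul_inv,
      ← Real.rpow_neg hq0.le]
    ring_nf
  have hq4 : q₀ ^ (4 - 2 * s) = q₀ ^ (3 - 2 * s) * q₀ := by
    rw [show (4 - 2 * s : ℝ) = (3 - 2 * s) + 1 by ring, Real.rpow_add hq0, Real.rpow_one]
  have halg : m * (b - a) = (π / 4) * A ^ (s - 2) * q₀ ^ (3 - 2 * s) := by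
    rw [hm, hba, hdiv, hq4]
    field_simp
    ring
  -- constant inequality
  have hconst : (π / 2) * B ^ (-(3 / 2) : ℝ) ≤ (π / 4) * A ^ (s - 2) := by
    set u : ℝ := A ^ ((3:ℝ) / 2) with hu
    set v : ℝ := B ^ ((3:ℝ) / 2) with hv
    have hu0 : 0 < u := Real.rpow_pos_of_pos hA0 _
    have hv0 : 0 < v := Real.rpow_pos_of_pos hB0 _
    have hu2 : u ^ 2 = A ^ 3 := by
      rw [hu, sq, ← Real.rpow_add hA0]
      norm_num
    have hv2 : v ^ 2 = B ^ 3 := by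
      rw [hv, sq, ← Real.rpow_add hB0]
      norm_num
    clear_value u v
    have hcube : 4 * A ^ 3 ≤ B ^ 3 := by
      have hx1 : (9.86:ℝ) ≤ π ^ 2 := by nlinarith [Real.pi_gt_d6]
      have hx2 : π ^ 2 ≤ (9.93:ℝ) := by nlinarith [Real.pi_lt_d2, Real.pi_pos]
      have hAle : A ≤ 6.59 := by rw [hA]; nlinarith
      have hBge : (10.86:ℝ) ≤ B := by rw [hB]; nlinarith
      have l1 : A ^ 3 ≤ (6.59:ℝ) ^ 3 := pow_le_pow_left₀ hA0.le hAle 3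
      have l2 : (10.86:ℝ) ^ 3 ≤ B ^ 3 := pow_le_pow_left₀ (by norm_num) hBge 3
      nlinarith [l1, l2]
    have huv : 2 * u ≤ v := by nlinarith [sq_nonneg (v - 2 * u)]
    have e1 : B ^ (-(3 / 2) : ℝ) = v⁻¹ := by
      rw [hv, ← Real.rpow_neg hB0.le]
    have e2 : A ^ (-((3:ℝ) / 2)) = u⁻¹ := by
      rw [hu, ← Real.rpow_neg hA0.le]
    have h3 : (π / 2) * v⁻¹ ≤ (π / 4) * u⁻¹ := by
      rw [← div_eq_mul_inv, ← div_eq_mul_inv,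
        div_le_div_iff₀ (by positivity) (by positivity)]
      nlinarith [Real.pi_pos]
    have h4 : A ^ (-((3:ℝ) / 2)) ≤ A ^ (s - 2) :=
      Real.rpow_le_rpow_of_exponent_le hA1 (by linarith)
    calc (π / 2) * B ^ (-(3 / 2) : ℝ) = (π / 2) * v⁻¹ := by rw [e1]
      _ ≤ (π / 4) * u⁻¹ := h3
      _ = (π / 4) * A ^ (-((3:ℝ) / 2)) := by rw [e2]
      _ ≤ (π / 4) * A ^ (s - 2) :=
          mul_le_mul_of_nonneg_left h4 (by positivity)
  calc (π / 2) * B ^ (-(3 / 2) : ℝ) * q₀ ^ (3 - 2 * s)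
      ≤ (π / 4) * A ^ (s - 2) * q₀ ^ (3 - 2 * s) :=
        mul_le_mul_of_nonneg_right hconst (Real.rpow_nonneg hq0.le _)
    _ = m * (b - a) := halg.symm
    _ ≤ ∫ ξ in Ioc a b, f ξ := hstep1
    _ ≤ ∫ ξ in Ioi (0:ℝ), f ξ := hstep2
end

section
/- Let q₀ ∈ (0,1) and s ∈ (1/2, 3/2). Then ∫_0^∞ (1+ξ²)^{s−2} sin²(q₀ξ) dξ ≤ (1/(2s−1) + 1/(3−2s)) q₀^{3−2s}. More precisely, ∫_0^{1/q₀} (1+ξ²)^{s−2} sin²(q₀ξ) dξ ≤ q₀^{3−2s}/(2s−1) and ∫_{1/q₀}^∞ (1+ξ²)^{s−2} sin²(q₀ξ) dξ ≤ q₀^{3−2s}/(3−2s). -/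
open MeasureTheory Real Set
open intervalIntegral in

/-- For `q₀ ∈ (0,1)` and `s ∈ (1/2, 3/2)`,
`∫_0^{1/q₀} (1+ξ²)^{s-2} sin²(q₀ξ) dξ ≤ q₀^{3-2s}/(2s-1)`,
`∫_{1/q₀}^∞ (1+ξ²)^{s-2} sin²(q₀ξ) dξ ≤ q₀^{3-2s}/(3-2s)`, and consequently
`∫_0^∞ (1+ξ²)^{s-2} sin²(q₀ξ) dξ ≤ (1/(2s-1) + 1/(3-2s)) q₀^{3-2s}`. -/
theorem integral_upper_bound (q₀ s : ℝ) (hq₀ : q₀ ∈ Ioo (0 : ℝ) 1)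
    (hs : s ∈ Ioo (1 / 2 : ℝ) (3 / 2)) :
    (∫ ξ in Ioo (0 : ℝ) (1 / q₀), (1 + ξ ^ 2) ^ (s - 2) * Real.sin (q₀ * ξ) ^ 2) ≤
        q₀ ^ (3 - 2 * s) / (2 * s - 1) ∧
      (∫ ξ in Ioi (1 / q₀), (1 + ξ ^ 2) ^ (s - 2) * Real.sin (q₀ * ξ) ^ 2) ≤
        q₀ ^ (3 - 2 * s) / (3 - 2 * s) ∧
      (∫ ξ in Ioi (0 : ℝ), (1 + ξ ^ 2) ^ (s - 2) * Real.sin (q₀ * ξ) ^ 2) ≤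
        (1 / (2 * s - 1) + 1 / (3 - 2 * s)) * q₀ ^ (3 - 2 * s) := by
  obtain ⟨hq0, hq1⟩ := hq₀
  obtain ⟨hs1, hs3⟩ := hs
  set a : ℝ := 1 / q₀ with ha_def
  have ha : 0 < a := by positivity
  set g : ℝ → ℝ := fun ξ => (1 + ξ ^ 2) ^ (s - 2) * Real.sin (q₀ * ξ) ^ 2 with hg_def
  have hgc : Continuous g := by
    apply Continuous.mul
    · exact (continuous_const.add (continuous_pow 2)).rpow_const
        (fun x => Or.inl (by have hx : (0:ℝ) < 1 + x ^ 2 := (by positivity); exact hx.ne'))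
    · exact (Real.continuous_sin.comp (continuous_const.mul continuous_id)).pow 2
  have hgnn : ∀ ξ, 0 ≤ g ξ := fun ξ => by
    apply mul_nonneg _ (sq_nonneg _)
    positivity
  -- base bound valid for all ξ > 0
  have hbase : ∀ ξ : ℝ, 0 < ξ → (1 + ξ ^ 2) ^ (s - 2) ≤ ξ ^ (2 * s - 4) := by
    intro ξ hξ0
    have h1 : (1 + ξ ^ 2) ^ (s - 2) ≤ (ξ ^ 2) ^ (s - 2) :=
      Real.rpow_le_rpow_of_nonpos (by positivity) (by linarith) (by linarith)
    have h2 : (ξ ^ 2) ^ (s - 2) = ξ ^ (2 * s - 4) := by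
      rw [← Real.rpow_natCast ξ 2, ← Real.rpow_mul hξ0.le]
      norm_num
      ring_nf
    linarith [h2 ▸ h1]
  -- a^x in terms of q₀
  have hax : ∀ x : ℝ, a ^ x = q₀ ^ (-x) := by
    intro x
    rw [ha_def, one_div, ← Real.rpow_neg_one q₀, ← Real.rpow_mul hq0.le]
    ring_nf
  -- pointwise bound on Ioi a
  have hbound2 : ∀ ξ ∈ Ioi a, g ξ ≤ ξ ^ (2 * s - 4) := by
    intro ξ hξ
    have hξ0 : 0 < ξ := ha.trans hξ
    calc g ξ ≤ (1 + ξ ^ 2) ^ (s - 2) * 1 :=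
          mul_le_mul_of_nonneg_left (Real.sin_sq_le_one _) (by positivity)
      _ = (1 + ξ ^ 2) ^ (s - 2) := mul_one _
      _ ≤ ξ ^ (2 * s - 4) := hbase ξ hξ0
  -- pointwise bound on Ioo 0 a
  have hbound1 : ∀ ξ ∈ Ioo (0 : ℝ) a, g ξ ≤ q₀ ^ (2 : ℝ) * ξ ^ (2 * s - 2) := by
    intro ξ hξ
    have hξ0 : 0 < ξ := hξ.1
    have h2 : Real.sin (q₀ * ξ) ^ 2 ≤ (q₀ * ξ) ^ 2 := Real.sin_sq_le_sq
    have h3 : ξ ^ (2 * s - 4) * (q₀ * ξ) ^ 2 = q₀ ^ (2 : ℝ) * ξ ^ (2 * s - 2) := by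
      rw [mul_pow, ← Real.rpow_natCast q₀ 2, ← Real.rpow_natCast ξ 2,
        mul_left_comm, ← Real.rpow_add hξ0,
        show 2 * s - 4 + ((2 : ℕ) : ℝ) = 2 * s - 2 by push_cast; ring]
      norm_num
    calc g ξ ≤ ξ ^ (2 * s - 4) * (q₀ * ξ) ^ 2 := by
          apply mul_le_mul (hbase ξ hξ0) h2 (sq_nonneg _)
          positivity
      _ = q₀ ^ (2 : ℝ) * ξ ^ (2 * s - 2) := h3
  -- integrability on Ioi a
  have hint2' : IntegrableOn (fun ξ : ℝ => ξ ^ (2 * s - 4)) (Ioi a) :=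
    integrableOn_Ioi_rpow_of_lt (by linarith) ha
  have hint2 : IntegrableOn g (Ioi a) := by
    apply Integrable.mono' hint2' hgc.aestronglyMeasurable.restrict
    filter_upwards [ae_restrict_mem measurableSet_Ioi] with ξ hξ
    rw [Real.norm_eq_abs, abs_of_nonneg (hgnn ξ)]
    exact hbound2 ξ hξ
  -- integrability on Ioo 0 a
  have hint1 : IntegrableOn g (Ioo 0 a) :=
    (hgc.integrableOn_Icc (a := 0) (b := a)).mono_set Ioo_subset_Icc_self
  have hint1' : IntegrableOn (fun ξ : ℝ => q₀ ^ (2 : ℝ) * ξ ^ (2 * s - 2)) (Ioo 0 a) := by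
    apply Integrable.const_mul
    exact ((intervalIntegrable_iff_integrableOn_Ioo_of_le ha.le).mp
      (intervalIntegral.intervalIntegrable_rpow' (by linarith)))
  -- Part 1
  have part1 : (∫ ξ in Ioo (0 : ℝ) a, g ξ) ≤ q₀ ^ (3 - 2 * s) / (2 * s - 1) := by
    have h := setIntegral_mono_on hint1 hint1' measurableSet_Ioo hbound1
    have hval : (∫ ξ in Ioo (0 : ℝ) a, q₀ ^ (2 : ℝ) * ξ ^ (2 * s - 2)) =
        q₀ ^ (3 - 2 * s) / (2 * s - 1) := by
      rw [MeasureTheory.integral_const_mul, ← integral_Ioc_eq_integral_Ioo,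
        ← intervalIntegral.integral_of_le ha.le,
        integral_rpow (Or.inl (by linarith : (-1 : ℝ) < 2 * s - 2))]
      rw [Real.zero_rpow (by linarith : 2 * s - 2 + 1 ≠ 0),
        show 2 * s - 2 + 1 = 2 * s - 1 by ring, hax (2 * s - 1), sub_zero,
        ← mul_div_assoc, ← Real.rpow_add hq0,
        show (2 : ℝ) + -(2 * s - 1) = 3 - 2 * s by ring]
    linarith [hval ▸ h]
  -- Part 2
  have part2 : (∫ ξ in Ioi a, g ξ) ≤ q₀ ^ (3 - 2 * s) / (3 - 2 * s) := by
    have h := setIntegral_mono_on hint2 hint2' measurableSet_Ioi hbound2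
    have hval : (∫ ξ in Ioi a, ξ ^ (2 * s - 4)) = q₀ ^ (3 - 2 * s) / (3 - 2 * s) := by
      rw [integral_Ioi_rpow_of_lt (by linarith : 2 * s - 4 < -1) ha]
      rw [show 2 * s - 4 + 1 = 2 * s - 3 by ring, hax (2 * s - 3)]
      have e1 : q₀ ^ (-(2 * s - 3)) = q₀ ^ (3 - 2 * s) := by congr 1; ring
      rw [e1]
      have h23 : 2 * s - 3 ≠ 0 := by intro h; nlinarith
      have h32 : 3 - 2 * s ≠ 0 := by intro h; nlinarith
      field_simp
      ring
    linarith [hval ▸ h]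
  refine ⟨part1, part2, ?_⟩
  -- Part 3
  have hsplit : (∫ ξ in Ioi (0 : ℝ), g ξ) =
      (∫ ξ in Ioo (0 : ℝ) a, g ξ) + ∫ ξ in Ioi a, g ξ := by
    have hdisj : Disjoint (Ioo (0 : ℝ) a) (Ici a) :=
      Set.disjoint_left.mpr fun x hx hx' => absurd hx.2 (not_lt.mpr hx')
    have hIci : IntegrableOn g (Ici a) :=
      Iff.mpr integrableOn_Ici_iff_integrableOn_Ioi hint2
    rw [← Ioo_union_Ici_eq_Ioi ha, setIntegral_union hdisj measurableSet_Ici hint1 hIci,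
      integral_Ici_eq_integral_Ioi]
  rw [hsplit]
  have hq3 : (0:ℝ) < q₀ ^ (3 - 2 * s) := Real.rpow_pos_of_pos hq0 _
  have : (1 / (2 * s - 1) + 1 / (3 - 2 * s)) * q₀ ^ (3 - 2 * s) =
      q₀ ^ (3 - 2 * s) / (2 * s - 1) + q₀ ^ (3 - 2 * s) / (3 - 2 * s) := by
    have h21 : 2 * s - 1 ≠ 0 := by intro h; nlinarith
    have h32 : 3 - 2 * s ≠ 0 := by intro h; nlinarith
    field_simp
  linarith
end

section
/- Let q₀ ∈ (0,1), p₀ > 0, u₀(x) = p₀(e^{-|x+q₀|} − e^{-|x−q₀|}), and T* := 1/(p₀(1 + e^{-2q₀})). Then for every t ∈ [0, T*) the map x ↦ x + t u₀(x) is a strictly increasing bijection from ℝ to ℝ. -/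
open Set Real

/-- For `q₀ ∈ (0,1)`, `p₀ > 0`, `u₀(x) = p₀(e^{-|x+q₀|} - e^{-|x-q₀|})` and
`T* = 1/(p₀(1 + e^{-2q₀}))`, for every `t ∈ [0,T*)` the map `x ↦ x + t u₀(x)` is a
strictly increasing bijection from `ℝ` to `ℝ`. -/
theorem flow_map_strictMono_bijective (q₀ p₀ : ℝ) (hq₀ : q₀ ∈ Ioo (0 : ℝ) 1) (hp₀ : 0 < p₀) :
    ∀ t : ℝ, 0 ≤ t → t < 1 / (p₀ * (1 + Real.exp (-2 * q₀))) →
      StrictMono (fun x : ℝ => x + t * (p₀ * (Real.exp (-|x + q₀|) - Real.exp (-|x - q₀|)))) ∧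
      Function.Bijective
        (fun x : ℝ => x + t * (p₀ * (Real.exp (-|x + q₀|) - Real.exp (-|x - q₀|)))) := by
  obtain ⟨hq, hq1⟩ := hq₀
  intro t ht htT
  set f : ℝ → ℝ := fun x : ℝ => x + t * (p₀ * (Real.exp (-|x + q₀|) - Real.exp (-|x - q₀|)))
    with hf
  have hL : 0 < p₀ * (1 + Real.exp (-2 * q₀)) := by positivity
  have htL : t * (p₀ * (1 + Real.exp (-2 * q₀))) < 1 := by
    rw [lt_div_iff₀ hL] at htT; linarith
  have hcont : Continuous f := by
    apply Continuous.add continuous_id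
    fun_prop
  -- derivative on (-∞, -q₀)
  have d1 : ∀ x ∈ Iio (-q₀), HasDerivAt f
      (1 + t * p₀ * (Real.exp (x + q₀) - Real.exp (x - q₀))) x := by
    intro x hx
    have hx' : x < -q₀ := hx
    have h1 : HasDerivAt (fun y : ℝ => Real.exp (y + q₀)) (Real.exp (x + q₀)) x := by
      exact ((Real.hasDerivAt_exp (x + q₀)).comp x ((hasDerivAt_id x).add_const q₀)).congr_deriv (by ring)
    have h2 : HasDerivAt (fun y : ℝ => Real.exp (y - q₀)) (Real.exp (x - q₀)) x := by
      exact ((Real.hasDerivAt_exp (x - q₀)).comp x ((hasDerivAt_id x).sub_const q₀)).congr_deriv (by ring)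
    have hg : HasDerivAt (fun y : ℝ => y + t * p₀ * (Real.exp (y + q₀) - Real.exp (y - q₀)))
        (1 + t * p₀ * (Real.exp (x + q₀) - Real.exp (x - q₀))) x := by
      exact ((hasDerivAt_id x).add (((h1.sub h2).const_mul (t * p₀)))).congr_deriv (by ring)
    apply hg.congr_of_eventuallyEq
    filter_upwards [Iio_mem_nhds hx'] with y hy
    have h3 : y + q₀ < 0 := by simp at hy; linarith
    have h4 : y - q₀ < 0 := by simp at hy; linarith
    simp only [hf, abs_of_neg h3, abs_of_neg h4]
    ring_nf
  -- derivative on (-q₀, q₀)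
  have d2 : ∀ x ∈ Ioo (-q₀) q₀, HasDerivAt f
      (1 + t * p₀ * (-Real.exp (-x - q₀) - Real.exp (x - q₀))) x := by
    intro x hx
    have h1 : HasDerivAt (fun y : ℝ => Real.exp (-y - q₀)) (-Real.exp (-x - q₀)) x := by
      have := (Real.hasDerivAt_exp (-x - q₀)).comp x ((hasDerivAt_id x).neg.sub_const q₀); exact this.congr_deriv (by ring)
    have h2 : HasDerivAt (fun y : ℝ => Real.exp (y - q₀)) (Real.exp (x - q₀)) x := by
      exact ((Real.hasDerivAt_exp (x - q₀)).comp x ((hasDerivAt_id x).sub_const q₀)).congr_deriv (by ring)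
    have hg : HasDerivAt (fun y : ℝ => y + t * p₀ * (Real.exp (-y - q₀) - Real.exp (y - q₀)))
        (1 + t * p₀ * (-Real.exp (-x - q₀) - Real.exp (x - q₀))) x := by
      exact ((hasDerivAt_id x).add (((h1.sub h2).const_mul (t * p₀)))).congr_deriv (by ring)
    apply hg.congr_of_eventuallyEq
    filter_upwards [Ioo_mem_nhds hx.1 hx.2] with y hy
    have h3 : 0 ≤ y + q₀ := by have := hy.1; linarith
    have h4 : y - q₀ < 0 := by have := hy.2; linarith
    simp only [hf, abs_of_nonneg h3, abs_of_neg h4]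
    ring_nf
  -- derivative on (q₀, ∞)
  have d3 : ∀ x ∈ Ioi q₀, HasDerivAt f
      (1 + t * p₀ * (-Real.exp (-x - q₀) + Real.exp (-x + q₀))) x := by
    intro x hx
    have hx' : q₀ < x := hx
    have h1 : HasDerivAt (fun y : ℝ => Real.exp (-y - q₀)) (-Real.exp (-x - q₀)) x := by
      have := (Real.hasDerivAt_exp (-x - q₀)).comp x ((hasDerivAt_id x).neg.sub_const q₀); exact this.congr_deriv (by ring)
    have h2 : HasDerivAt (fun y : ℝ => Real.exp (-y + q₀)) (-Real.exp (-x + q₀)) x := by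
      have := (Real.hasDerivAt_exp (-x + q₀)).comp x ((hasDerivAt_id x).neg.add_const q₀); exact this.congr_deriv (by ring)
    have hg : HasDerivAt (fun y : ℝ => y + t * p₀ * (Real.exp (-y - q₀) - Real.exp (-y + q₀)))
        (1 + t * p₀ * (-Real.exp (-x - q₀) + Real.exp (-x + q₀))) x := by
      have := (hasDerivAt_id x).add (((h1.sub h2).const_mul (t * p₀)))
      exact this.congr_deriv (by ring)
    apply hg.congr_of_eventuallyEq
    filter_upwards [Ioi_mem_nhds hx'] with y hy
    have h3 : 0 ≤ y + q₀ := by have : q₀ < y := hy; linarith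
    have h4 : 0 ≤ y - q₀ := by have : q₀ < y := hy; linarith
    simp only [hf, abs_of_nonneg h3, abs_of_nonneg h4]
    ring_nf
  have htp : 0 ≤ t * p₀ := mul_nonneg ht hp₀.le
  -- strict monotonicity on pieces
  have s1 : StrictMonoOn f (Iic (-q₀)) := by
    apply strictMonoOn_of_deriv_pos (convex_Iic _) hcont.continuousOn
    intro x hx
    rw [interior_Iic] at hx
    rw [(d1 x hx).deriv]
    have : Real.exp (x - q₀) < Real.exp (x + q₀) := Real.exp_lt_exp.2 (by linarith)
    nlinarith [Real.exp_pos (x - q₀)]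
  have s2 : StrictMonoOn f (Icc (-q₀) q₀) := by
    apply strictMonoOn_of_deriv_pos (convex_Icc _ _) hcont.continuousOn
    intro x hx
    rw [interior_Icc] at hx
    rw [(d2 x hx).deriv]
    have key : Real.exp (-x - q₀) + Real.exp (x - q₀) ≤ 1 + Real.exp (-2 * q₀) := by
      have e1 : Real.exp (x - q₀) ≤ 1 := Real.exp_le_one_iff.2 (by linarith [hx.2])
      have e2 : Real.exp (-x - q₀) ≤ 1 := Real.exp_le_one_iff.2 (by linarith [hx.1])
      have hmul : Real.exp (-x - q₀) * Real.exp (x - q₀) = Real.exp (-2 * q₀) := by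
        rw [← Real.exp_add]; ring_nf
      nlinarith [mul_nonneg (sub_nonneg.2 e1) (sub_nonneg.2 e2)]
    nlinarith [Real.exp_pos (-x - q₀), Real.exp_pos (x - q₀), mul_le_mul_of_nonneg_left key htp]
  have s3 : StrictMonoOn f (Ici q₀) := by
    apply strictMonoOn_of_deriv_pos (convex_Ici _) hcont.continuousOn
    intro x hx
    rw [interior_Ici] at hx
    rw [(d3 x hx).deriv]
    have : Real.exp (-x - q₀) < Real.exp (-x + q₀) := Real.exp_lt_exp.2 (by linarith)
    nlinarith
  have s12 : StrictMonoOn f (Iic q₀) := by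
    have := s1.union s2 isGreatest_Iic ⟨⟨le_refl _, by linarith⟩, fun y hy => hy.1⟩
    rwa [Iic_union_Icc_eq_Iic (by linarith)] at this
  have hmono : StrictMono f := s12.Iic_union_Ici s3
  refine ⟨hmono, hmono.injective, ?_⟩
  -- surjectivity
  have bound : ∀ x : ℝ, x - t * (2 * p₀) ≤ f x ∧ f x ≤ x + t * (2 * p₀) := by
    intro x
    have h1 : Real.exp (-|x + q₀|) ≤ 1 := Real.exp_le_one_iff.2 (neg_nonpos.2 (abs_nonneg _))
    have h2 : Real.exp (-|x - q₀|) ≤ 1 := Real.exp_le_one_iff.2 (neg_nonpos.2 (abs_nonneg _))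
    have h3 := Real.exp_pos (-|x + q₀|)
    have h4 := Real.exp_pos (-|x - q₀|)
    constructor <;> simp only [hf] <;> nlinarith
  apply hcont.surjective
  · apply Filter.tendsto_atTop_mono (fun x => (bound x).1)
    exact Filter.tendsto_atTop_add_const_right _ _ Filter.tendsto_id
  · apply Filter.tendsto_atBot_mono (fun x => (bound x).2)
    exact Filter.tendsto_atBot_add_const_right _ _ Filter.tendsto_id
end
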